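/- arXiv:2502.08194 — 2 statements merged into one kernel-verified Lean document; each statement's English description precedes it below -/
import Mathlib

section
/- Fractional chain-rule inequality (Alikhanov): Let 0 < α < 1, T > 0, and let w : [0,T] → ℝ be continuously differentiable. Then for every t ∈ (0,T], the pointwise inequality w(t) · (D^α w)(t) ≥ (1/2) · (D^α (w²))(t) holds, i.e. (1/Γ(1−α)) ∫₀ᵗ (t−s)^{−α} w(s)·w′(s) − (1/2)(w²)′(s) ds ≥ 0; equivalently, since (w²)′ = 2 w w′, one has ∫₀ᵗ (t−s)^{−α} ( w(t) − w(s) ) w′(s) ds ≥ 0. -/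
open MeasureTheory intervalIntegral Set Filter

/-- The Djrbashian–Caputo fractional derivative of order `α ∈ (0,1)` of a
continuously differentiable function `f`:
`(D^α f)(t) = (1/Γ(1−α)) ∫₀ᵗ (t−s)^{−α} f′(s) ds`. -/
noncomputable def caputoDeriv (α : ℝ) (f : ℝ → ℝ) (t : ℝ) : ℝ :=
  (1 / Real.Gamma (1 - α)) * ∫ s in (0:ℝ)..t, (t - s) ^ (-α) * deriv f s

/-- Fractional chain-rule inequality (Alikhanov):
`w(t) · (D^α w)(t) ≥ ½ (D^α (w²))(t)` pointwise on `(0,T]`, equivalently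
`∫₀ᵗ (t−s)^{−α} (w(t) − w(s)) w′(s) ds ≥ 0`. -/
theorem fractional_chain_rule_inequality
    (α T : ℝ) (hα0 : 0 < α) (hα1 : α < 1) (hT : 0 < T)
    (w : ℝ → ℝ) (hw : ContDiff ℝ 1 w) :
    ∀ t ∈ Set.Ioc (0:ℝ) T,
      w t * caputoDeriv α w t ≥ (1/2) * caputoDeriv α (fun s => (w s)^2) t ∧
      0 ≤ ∫ s in (0:ℝ)..t, (t - s) ^ (-α) * ((w t - w s) * deriv w s) := by
  intro t ht
  obtain ⟨ht0, htT⟩ := ht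
  have hwd : Differentiable ℝ w := hw.differentiable one_ne_zero
  have hw' : Continuous (deriv w) := hw.continuous_deriv le_rfl
  set f : ℝ → ℝ := fun s => (t - s) ^ (-α) with hf_def
  set g : ℝ → ℝ := fun s => (w t - w s) * deriv w s with hg_def
  set φ : ℝ → ℝ := fun s => (w t - w s) ^ 2 / 2 with hφ_def
  have hφ_nonneg : ∀ s, 0 ≤ φ s := fun s => by positivity
  have hg_cont : Continuous g := (continuous_const.sub hw.continuous).mul hw'
  have hf_int : IntervalIntegrable f volume 0 t := by
    have h1 := intervalIntegral.intervalIntegrable_rpow' (a := 0) (b := t)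
      (show (-1:ℝ) < -α by linarith)
    have h2 := h1.comp_sub_left t
    simpa using h2.symm
  have hfg_int : IntervalIntegrable (fun s => f s * g s) volume 0 t :=
    hf_int.mul_continuousOn hg_cont.continuousOn
  obtain ⟨C, hC⟩ := (isCompact_Icc (a := (0:ℝ)) (b := t)).exists_bound_of_continuousOn
    hw'.continuousOn
  have hC0 : 0 ≤ C := le_trans (norm_nonneg _) (hC 0 ⟨le_rfl, ht0.le⟩)
  have hlip : ∀ u ∈ Icc (0:ℝ) t, |w t - w u| ≤ C * (t - u) := by
    intro u hu
    have h := Convex.norm_image_sub_le_of_norm_deriv_le (f := w) (s := Icc (0:ℝ) t)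
      (fun x _ => hwd x) hC (convex_Icc 0 t) hu ⟨ht0.le, le_rfl⟩
    rw [Real.norm_eq_abs, Real.norm_eq_abs] at h
    calc |w t - w u| ≤ C * |t - u| := h
      _ = C * (t - u) := by rw [abs_of_nonneg (by linarith [hu.2])]
  set Φ : ℝ → ℝ := fun u => ∫ s in (0:ℝ)..u, f s * g s with hΦ_def
  have key : ∀ u ∈ Ico (0:ℝ) t, -(f u * φ u) ≤ Φ u := by
    intro u hu
    have hut : u < t := hu.2
    have hsub : uIcc (0:ℝ) u = Icc 0 u := uIcc_of_le hu.1
    have hfderiv : ∀ x ∈ uIcc (0:ℝ) u, HasDerivAt f (α * (t - x) ^ (-α - 1)) x := by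
      intro x hx
      rw [hsub] at hx
      have hxt : t - x ≠ 0 := by have := hx.2; intro h; linarith
      have h1 : HasDerivAt (fun s : ℝ => t - s) (-1) x := by
        simpa using (hasDerivAt_id x).const_sub t
      have h2 := (Real.hasDerivAt_rpow_const (x := t - x) (p := -α) (Or.inl hxt)).comp x h1
      refine h2.congr_deriv ?_
      ring
    have hφderiv : ∀ x : ℝ, HasDerivAt φ (-(g x)) x := by
      intro x
      have h1 : HasDerivAt (fun s => w t - w s) (-(deriv w x)) x := by
        simpa using (hwd x).hasDerivAt.const_sub (w t)
      have h2 := (h1.fun_pow 2).div_const 2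
      refine h2.congr_deriv ?_
      simp only [hg_def, Nat.cast_ofNat]
      ring
    have hf'_int : IntervalIntegrable (fun x => α * (t - x) ^ (-α - 1)) volume 0 u := by
      apply ContinuousOn.intervalIntegrable
      apply ContinuousOn.mul continuousOn_const
      apply ContinuousOn.rpow_const (continuousOn_const.sub continuousOn_id)
      intro x hx
      rw [hsub] at hx
      left
      show t - x ≠ 0
      have := hx.2
      intro h; linarith
    have hφ'_int : IntervalIntegrable (fun x => -(g x)) volume 0 u :=
      hg_cont.neg.continuousOn.intervalIntegrable
    have ibp := intervalIntegral.integral_mul_deriv_eq_deriv_mul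
      (u := f) (v := φ) (a := 0) (b := u) hfderiv (fun x _ => hφderiv x) hf'_int hφ'_int
    have hΦeq : Φ u = -(∫ x in (0:ℝ)..u, f x * (-(g x))) := by
      simp only [hΦ_def]
      rw [intervalIntegral.integral_congr
        (g := fun x => -(f x * (-(g x)))) (fun x _ => by ring)]
      rw [intervalIntegral.integral_neg]
    have h2 : Φ u = f 0 * φ 0 - f u * φ u
        + ∫ x in (0:ℝ)..u, (α * (t - x) ^ (-α - 1)) * φ x := by
      rw [hΦeq, ibp]; ring
    have hterm1 : 0 ≤ f 0 * φ 0 := by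
      apply mul_nonneg _ (hφ_nonneg 0)
      show (0:ℝ) ≤ (t - 0) ^ (-α)
      exact Real.rpow_nonneg (by linarith) _
    have hterm2 : 0 ≤ ∫ x in (0:ℝ)..u, (α * (t - x) ^ (-α - 1)) * φ x := by
      apply intervalIntegral.integral_nonneg hu.1
      intro x hx
      exact mul_nonneg (mul_nonneg hα0.le
        (Real.rpow_nonneg (by linarith [hx.2]) _)) (hφ_nonneg x)
    linarith
  have hne : (nhdsWithin t (Ico (0:ℝ) t)).NeBot := by
    rw [← mem_closure_iff_nhdsWithin_neBot, closure_Ico ht0.ne]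
    exact ⟨ht0.le, le_rfl⟩
  have hΦc : Filter.Tendsto Φ (nhdsWithin t (Ico (0:ℝ) t)) (nhds (Φ t)) := by
    have h1 : ContinuousOn Φ (uIcc (0:ℝ) t) :=
      intervalIntegral.continuousOn_primitive_interval' hfg_int left_mem_uIcc
    exact (h1 t right_mem_uIcc).tendsto.mono_left
      (nhdsWithin_mono t (by rw [uIcc_of_le ht0.le]; exact Ico_subset_Icc_self))
  have hfφ0 : Filter.Tendsto (fun u => f u * φ u) (nhdsWithin t (Ico (0:ℝ) t)) (nhds 0) := by
    apply squeeze_zero' (eventually_nhdsWithin_of_forall ?pos)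
      (eventually_nhdsWithin_of_forall ?bnd) ?lim
    case pos =>
      intro u hu
      have hut : (0:ℝ) ≤ t - u := by linarith [hu.2]
      exact mul_nonneg (Real.rpow_nonneg hut _) (hφ_nonneg u)
    case bnd =>
      intro u hu
      have hut : 0 < t - u := by linarith [hu.2]
      have hb := hlip u ⟨hu.1, hu.2.le⟩
      have hb2 : (w t - w u) ^ 2 ≤ (C * (t - u)) ^ 2 := by
        rw [← sq_abs (w t - w u)]
        exact pow_le_pow_left₀ (abs_nonneg _) hb 2
      have hφu : φ u = (w t - w u) ^ 2 / 2 := rfl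
      have hstep : f u * φ u ≤ (t - u) ^ (-α) * ((C * (t - u)) ^ 2 / 2) :=
        mul_le_mul_of_nonneg_left (by linarith) (Real.rpow_nonneg hut.le _)
      calc f u * φ u ≤ (t - u) ^ (-α) * ((C * (t - u)) ^ 2 / 2) := hstep
        _ = C ^ 2 / 2 * (t - u) ^ ((2:ℝ) - α) := by
            rw [show (2:ℝ) - α = -α + 2 by ring, Real.rpow_add hut,
              show ((2:ℝ)) = ((2:ℕ):ℝ) by norm_num, Real.rpow_natCast]
            ring
    case lim =>
      have h1 : Filter.Tendsto (fun u : ℝ => t - u) (nhdsWithin t (Ico (0:ℝ) t)) (nhds 0) := by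
        have h := Continuous.tendsto (f := fun u : ℝ => t - u)
          (continuous_const.sub continuous_id) t
        simp only [sub_self] at h
        exact h.mono_left nhdsWithin_le_nhds
      have h2 : Filter.Tendsto (fun x : ℝ => x ^ ((2:ℝ) - α)) (nhds 0) (nhds 0) := by
        have h := (Real.continuousAt_rpow_const 0 (2 - α) (Or.inr (by linarith))).tendsto
        simpa [Real.zero_rpow (show (2:ℝ) - α ≠ 0 by linarith)] using h
      have h3 := (h2.comp h1).const_mul (C ^ 2 / 2)
      simpa using h3
  have hI : 0 ≤ Φ t := by
    have hneg : Filter.Tendsto (fun u => -(f u * φ u)) (nhdsWithin t (Ico (0:ℝ) t))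
        (nhds 0) := by simpa using hfφ0.neg
    exact le_of_tendsto_of_tendsto hneg hΦc (eventually_nhdsWithin_of_forall key)
  -- first part
  have hΓ : 0 < Real.Gamma (1 - α) := Real.Gamma_pos_of_pos (by linarith)
  have hc : 0 ≤ 1 / Real.Gamma (1 - α) := by positivity
  have hderiv_sq : ∀ s, deriv (fun s => (w s)^2) s = 2 * w s * deriv w s := by
    intro s
    have h := ((hwd s).hasDerivAt.fun_pow 2).deriv
    simpa using h
  have hint1 : IntervalIntegrable (fun s => f s * (w t * deriv w s)) volume 0 t :=
    hf_int.mul_continuousOn (continuous_const.mul hw').continuousOn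
  have hint2 : IntervalIntegrable (fun s => f s * (w s * deriv w s)) volume 0 t :=
    hf_int.mul_continuousOn (hw.continuous.mul hw').continuousOn
  have hsplit : Φ t = (∫ s in (0:ℝ)..t, f s * (w t * deriv w s))
      - ∫ s in (0:ℝ)..t, f s * (w s * deriv w s) := by
    rw [← intervalIntegral.integral_sub hint1 hint2]
    apply intervalIntegral.integral_congr
    intro s _
    simp only [hg_def]
    ring
  have hA' : (∫ s in (0:ℝ)..t, f s * (w t * deriv w s))
      = w t * ∫ s in (0:ℝ)..t, f s * deriv w s := by
    rw [← intervalIntegral.integral_const_mul]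
    apply intervalIntegral.integral_congr
    intro s _
    ring
  have hB : caputoDeriv α (fun s => (w s)^2) t
      = (1 / Real.Gamma (1 - α)) * (2 * ∫ s in (0:ℝ)..t, f s * (w s * deriv w s)) := by
    unfold caputoDeriv
    congr 1
    rw [← intervalIntegral.integral_const_mul]
    apply intervalIntegral.integral_congr
    intro s _
    simp only [hderiv_sq, hf_def]
    ring
  have hAcap : caputoDeriv α w t
      = (1 / Real.Gamma (1 - α)) * ∫ s in (0:ℝ)..t, f s * deriv w s := rfl
  constructor
  · rw [ge_iff_le, hB, hAcap]
    have hkey : (∫ s in (0:ℝ)..t, f s * (w s * deriv w s))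
        ≤ w t * ∫ s in (0:ℝ)..t, f s * deriv w s := by
      rw [← hA']
      linarith [hI, hsplit.symm.le, hsplit.le]
    calc (1:ℝ)/2 * ((1 / Real.Gamma (1 - α)) * (2 * ∫ s in (0:ℝ)..t, f s * (w s * deriv w s)))
        = (1 / Real.Gamma (1 - α)) * ∫ s in (0:ℝ)..t, f s * (w s * deriv w s) := by ring
      _ ≤ (1 / Real.Gamma (1 - α)) * (w t * ∫ s in (0:ℝ)..t, f s * deriv w s) :=
          mul_le_mul_of_nonneg_left hkey hc
      _ = w t * ((1 / Real.Gamma (1 - α)) * ∫ s in (0:ℝ)..t, f s * deriv w s) := by ring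
  · exact hI
end

section
/- Second-sound (thermal wave) reformulation of the linear Jordan–Moore–Gibson–Thompson equation: Let n ≥ 1, τ > 0, δ > 0, c > 0, set b = δ + τc², k = c²/b and γ = 1/τ − k. Suppose ψ : ℝ × ℝⁿ → ℝ is three times continuously differentiable and satisfies pointwise the linear MGT equation τ ψ_ttt + ψ_tt − c² Δψ − b Δψ_t = 0 (where Δ acts in the spatial variables and subscripts t denote time derivatives). Then γ > 0, and the auxiliary function z := ψ_t + k ψ satisfies pointwise the weakly damped wave equation z_tt − (c² + δ/τ) Δz + γ z_t = γ k ( z − k ψ ), whose right-hand side contains no derivatives of z or ψ. -/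
open scoped BigOperators

/-- Partial derivative in the time variable of a function `u(t,x)`. -/
noncomputable def timeDeriv {n : ℕ} (u : ℝ → (Fin n → ℝ) → ℝ) : ℝ → (Fin n → ℝ) → ℝ :=
  fun t x => deriv (fun τ => u τ x) t

/-- Spatial Laplacian `Δu(x) = Σ_{i=1}^n ∂²u/∂x_i²(x)` of `u : ℝⁿ → ℝ`. -/
noncomputable def lap {n : ℕ} (u : (Fin n → ℝ) → ℝ) (x : Fin n → ℝ) : ℝ :=
  ∑ i : Fin n, iteratedDeriv 2 (fun s => u (Function.update x i s)) (x i)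

private lemma sliceDeriv {n : ℕ} (G : ℝ × (Fin n → ℝ) → ℝ) (hG : Differentiable ℝ G)
    (t : ℝ) (x : Fin n → ℝ) :
    HasDerivAt (fun s => G (s, x)) (fderiv ℝ G (t, x) (1, 0)) t := by
  have h1 : HasDerivAt (fun s : ℝ => (s, x)) ((1 : ℝ), (0 : Fin n → ℝ)) t :=
    (hasDerivAt_id t).prodMk (hasDerivAt_const t x)
  exact (hG (t, x)).hasFDerivAt.comp_hasDerivAt t h1

private lemma iter2_lin (f g : ℝ → ℝ) (hf : ContDiff ℝ 2 f) (hg : ContDiff ℝ 2 g) (k x : ℝ) :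
    iteratedDeriv 2 (fun s => f s + k * g s) x
      = iteratedDeriv 2 f x + k * iteratedDeriv 2 g x := by
  have h1 : (fun s => f s + k * g s) = (f + fun s => k * g s) := rfl
  rw [← iteratedDerivWithin_univ, ← iteratedDerivWithin_univ, ← iteratedDerivWithin_univ, h1,
    iteratedDerivWithin_add (Set.mem_univ x) uniqueDiffOn_univ hf.contDiffWithinAt
      ((contDiff_const.mul hg).contDiffWithinAt),
    iteratedDerivWithin_const_mul (Set.mem_univ x) uniqueDiffOn_univ k hg.contDiffWithinAt]

/-- Second-sound (thermal wave) reformulation of the linear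
Jordan–Moore–Gibson–Thompson equation: if `ψ` solves
`τ ψ_ttt + ψ_tt − c² Δψ − b Δψ_t = 0` with `b = δ + τc²`, `k = c²/b`,
`γ = 1/τ − k`, then `γ > 0` and `z := ψ_t + k ψ` solves the weakly damped
wave equation `z_tt − (c² + δ/τ) Δz + γ z_t = γ k (z − k ψ)`. -/
theorem jmgt_second_sound
    (n : ℕ) (hn : 1 ≤ n) (τ δ c b k γ : ℝ)
    (hτ : 0 < τ) (hδ : 0 < δ) (hc : 0 < c)
    (hb : b = δ + τ * c ^ 2) (hk : k = c ^ 2 / b) (hγ : γ = 1 / τ - k)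
    (ψ : ℝ → (Fin n → ℝ) → ℝ)
    (hψ : ContDiff ℝ 3 (fun p : ℝ × (Fin n → ℝ) => ψ p.1 p.2))
    (hpde : ∀ (t : ℝ) (x : Fin n → ℝ),
      τ * timeDeriv (timeDeriv (timeDeriv ψ)) t x + timeDeriv (timeDeriv ψ) t x
        - c ^ 2 * lap (ψ t) x - b * lap (timeDeriv ψ t) x = 0) :
    0 < γ ∧
    ∀ (t : ℝ) (x : Fin n → ℝ),
      timeDeriv (timeDeriv (fun s y => timeDeriv ψ s y + k * ψ s y)) t x
        - (c ^ 2 + δ / τ) * lap (fun y => timeDeriv ψ t y + k * ψ t y) x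
        + γ * timeDeriv (fun s y => timeDeriv ψ s y + k * ψ s y) t x
      = γ * k * ((timeDeriv ψ t x + k * ψ t x) - k * ψ t x) := by
  have hbpos : 0 < b := by rw [hb]; positivity
  have hb0 : b ≠ 0 := hbpos.ne'
  have hτ0 : τ ≠ 0 := hτ.ne'
  have hγpos : 0 < γ := by
    rw [hγ, hk, hb]
    rw [sub_pos, div_lt_div_iff₀ (by positivity) hτ]
    nlinarith [sq_nonneg c]
  refine ⟨hγpos, ?_⟩
  set F : ℝ × (Fin n → ℝ) → ℝ := fun p => ψ p.1 p.2 with hFdef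
  set F1 : ℝ × (Fin n → ℝ) → ℝ := fun p => fderiv ℝ F p (1, 0) with hF1def
  set F2 : ℝ × (Fin n → ℝ) → ℝ := fun p => fderiv ℝ F1 p (1, 0) with hF2def
  set F3 : ℝ × (Fin n → ℝ) → ℝ := fun p => fderiv ℝ F2 p (1, 0) with hF3def
  have hF : ContDiff ℝ 3 F := hψ
  have hF1 : ContDiff ℝ 2 F1 :=
    (hF.fderiv_right (by norm_num)).clm_apply contDiff_const
  have hF2 : ContDiff ℝ 1 F2 :=
    (hF1.fderiv_right (by norm_num)).clm_apply contDiff_const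
  -- time derivative identities
  have ht1 : ∀ (t : ℝ) (x : Fin n → ℝ), timeDeriv ψ t x = F1 (t, x) := fun t x =>
    (sliceDeriv F (hF.differentiable (by norm_num)) t x).deriv
  have ht2 : ∀ (t : ℝ) (x : Fin n → ℝ), timeDeriv (timeDeriv ψ) t x = F2 (t, x) := by
    intro t x
    have h : (fun s => timeDeriv ψ s x) = fun s => F1 (s, x) := funext fun s => ht1 s x
    rw [timeDeriv, h]
    exact (sliceDeriv F1 (hF1.differentiable (by norm_num)) t x).deriv
  have ht3 : ∀ (t : ℝ) (x : Fin n → ℝ),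
      timeDeriv (timeDeriv (timeDeriv ψ)) t x = F3 (t, x) := by
    intro t x
    have h : (fun s => timeDeriv (timeDeriv ψ) s x) = fun s => F2 (s, x) :=
      funext fun s => ht2 s x
    rw [timeDeriv, h]
    exact (sliceDeriv F2 (hF2.differentiable (by norm_num)) t x).deriv
  -- z derivatives
  have hz1 : ∀ (t : ℝ) (x : Fin n → ℝ),
      timeDeriv (fun s y => timeDeriv ψ s y + k * ψ s y) t x
        = F2 (t, x) + k * F1 (t, x) := by
    intro t x
    have h : (fun s => timeDeriv ψ s x + k * ψ s x)
        = fun s => F1 (s, x) + k * F (s, x) := funext fun s => by rw [ht1]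
    rw [timeDeriv, h]
    exact ((sliceDeriv F1 (hF1.differentiable (by norm_num)) t x).add
      ((sliceDeriv F (hF.differentiable (by norm_num)) t x).const_mul k)).deriv
  have hz2 : ∀ (t : ℝ) (x : Fin n → ℝ),
      timeDeriv (timeDeriv (fun s y => timeDeriv ψ s y + k * ψ s y)) t x
        = F3 (t, x) + k * F2 (t, x) := by
    intro t x
    have h : (fun s => timeDeriv (fun s y => timeDeriv ψ s y + k * ψ s y) s x)
        = fun s => F2 (s, x) + k * F1 (s, x) := funext fun s => hz1 s x
    rw [timeDeriv, h]
    exact ((sliceDeriv F2 (hF2.differentiable (by norm_num)) t x).add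
      ((sliceDeriv F1 (hF1.differentiable (by norm_num)) t x).const_mul k)).deriv
  -- laplacian linearity
  have hlap : ∀ (t : ℝ) (x : Fin n → ℝ),
      lap (fun y => timeDeriv ψ t y + k * ψ t y) x
        = lap (fun y => F1 (t, y)) x + k * lap (ψ t) x := by
    intro t x
    have hψt : ∀ y, timeDeriv ψ t y = F1 (t, y) := fun y => ht1 t y
    unfold lap
    rw [Finset.mul_sum, ← Finset.sum_add_distrib]
    refine Finset.sum_congr rfl fun i _ => ?_
    have hcu : ContDiff ℝ 2 fun s : ℝ => ((t, Function.update x i s) : ℝ × (Fin n → ℝ)) :=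
      contDiff_const.prodMk (contDiff_update 2 x i)
    have e1 : (fun s => timeDeriv ψ t (Function.update x i s) +
          k * ψ t (Function.update x i s))
        = fun s => F1 (t, Function.update x i s) + k * F (t, Function.update x i s) :=
      funext fun s => by rw [hψt]
    rw [e1]
    exact iter2_lin _ _ (hF1.comp hcu) ((hF.of_le (by norm_num)).comp hcu) k (x i)
  have hlap2 : ∀ (t : ℝ) (x : Fin n → ℝ),
      lap (timeDeriv ψ t) x = lap (fun y => F1 (t, y)) x := by
    intro t x
    have : timeDeriv ψ t = fun y => F1 (t, y) := funext fun y => ht1 t y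
    rw [this]
  intro t x
  have hp := hpde t x
  rw [ht3, ht2, hlap2] at hp
  rw [hz2, hlap, hz1, ht1]
  -- now pure algebra
  have hkb : k * b = c ^ 2 := by rw [hk]; field_simp
  have hcb : τ * (c ^ 2 + δ / τ) = b := by rw [hb]; field_simp; ring
  have hd : c ^ 2 + δ / τ = b / τ := by rw [hb]; field_simp; ring
  set A := F3 (t, x)
  set B := F2 (t, x)
  set C := F1 (t, x)
  set L1 := lap (fun y => F1 (t, y)) x
  set L0 := lap (ψ t) x
  rw [hγ, hd]
  have hτ1 : τ * τ⁻¹ = 1 := mul_inv_cancel₀ hτ0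
  linear_combination (1 / τ) * hp - (L0 / τ) * hkb - A * hτ1
end
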